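/- For any fixed w ∈ F with w ≠ 0, one has ∑_{(u,v) ∈ F²} D(u,v,w)² = (p−1)²·p^{3m}. -/

import Mathlib

/-- `ζ_p^a = exp(2πi·ā/p)` for `a ∈ 𝔽_p`, where `ā ∈ {0,…,p-1}` lifts `a`. -/
noncomputable def zetaC (p : ℕ) (a : ZMod p) : ℂ :=
  Complex.exp (2 * Real.pi * Complex.I * (a.val : ℂ) / (p : ℂ))

/-- `D(u,v,w) = ∑_{y ∈ 𝔽_p*} ∑_{x ∈ F} ζ_p^{y·Tr(ux² + vx^{p^k+1} + wx^{p^{2k}+1})}`. -/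
noncomputable def Dsum (p k : ℕ) [NeZero p] (F : Type) [Field F] [Fintype F]
    [Algebra (ZMod p) F] (u v w : F) : ℂ :=
  ∑ y ∈ ({0}ᶜ : Finset (ZMod p)), ∑ x : F,
    zetaC p (y * Algebra.trace (ZMod p) F
      (u * x ^ 2 + v * x ^ (p ^ k + 1) + w * x ^ (p ^ (2 * k) + 1)))

lemma zetaC_eq (p : ℕ) [NeZero p] (a : ZMod p) : zetaC p a = ZMod.stdAddChar a := by
  rw [ZMod.stdAddChar_apply, ZMod.toCircle_apply]
  rfl

lemma sum_swap_uv {M : Type*} [AddCommMonoid M] {ιu ιv ιa : Type*}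
    (su : Finset ιu) (sv : Finset ιv) (sa : Finset ιa) (f : ιu → ιv → ιa → M) :
    ∑ u ∈ su, ∑ v ∈ sv, ∑ a ∈ sa, f u v a = ∑ a ∈ sa, ∑ u ∈ su, ∑ v ∈ sv, f u v a := by
  calc ∑ u ∈ su, ∑ v ∈ sv, ∑ a ∈ sa, f u v a
      = ∑ u ∈ su, ∑ a ∈ sa, ∑ v ∈ sv, f u v a :=
        Finset.sum_congr rfl fun u _ => Finset.sum_comm
    _ = ∑ a ∈ sa, ∑ u ∈ su, ∑ v ∈ sv, f u v a := Finset.sum_comm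

lemma sum_swap_uv6 {M : Type*} [AddCommMonoid M] {ιu ιv ι1 ι2 ι3 ι4 : Type*}
    (su : Finset ιu) (sv : Finset ιv) (s1 : Finset ι1) (s2 : Finset ι2) (s3 : Finset ι3)
    (s4 : Finset ι4) (f : ιu → ιv → ι1 → ι2 → ι3 → ι4 → M) :
    ∑ u ∈ su, ∑ v ∈ sv, ∑ a ∈ s1, ∑ b ∈ s2, ∑ c ∈ s3, ∑ d ∈ s4, f u v a b c d
      = ∑ a ∈ s1, ∑ b ∈ s2, ∑ c ∈ s3, ∑ d ∈ s4, ∑ u ∈ su, ∑ v ∈ sv, f u v a b c d := by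
  refine (sum_swap_uv su sv s1 _).trans (Finset.sum_congr rfl fun a _ => ?_)
  refine (sum_swap_uv su sv s2 _).trans (Finset.sum_congr rfl fun b _ => ?_)
  refine (sum_swap_uv su sv s3 _).trans (Finset.sum_congr rfl fun c _ => ?_)
  exact sum_swap_uv su sv s4 _

lemma frob_gcd_fixed {F : Type*} [Field F] (p : ℕ) [Fact p.Prime] [CharP F p]
    (t : F) (a b : ℕ) (ha : t ^ p ^ a = t) (hb : t ^ p ^ b = t) :
    t ^ p ^ Nat.gcd a b = t := by
  induction a, b using Nat.gcd.induction with
  | H0 n => simpa using hb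
  | H1 a b hpos ih =>
    rw [Nat.gcd_rec]
    have key : ∀ q : ℕ, t ^ p ^ (a * q) = t := by
      intro q
      induction q with
      | zero => simpa
      | succ q ihq =>
        have h1 : p ^ (a * (q + 1)) = p ^ (a * q) * p ^ a := by
          rw [← pow_add]; ring_nf
        rw [h1, pow_mul, ihq, ha]
    have hmod : t ^ p ^ (b % a) = t := by
      have hinj : Function.Injective ((frobenius F p)^[a * (b / a)]) :=
        Function.Injective.iterate (frobenius F p).injective _
      apply hinj
      rw [iterate_frobenius, iterate_frobenius, key]
      rw [← pow_mul, ← pow_add]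
      rw [Nat.mod_add_div b a]
      exact hb
    exact ih hmod ha

lemma exists_zmod_of_pow_card {p : ℕ} [Fact p.Prime] {F : Type} [Field F] [Fintype F]
    [Algebra (ZMod p) F] {t : F} (ht : t ^ p = t) :
    ∃ s : ZMod p, algebraMap (ZMod p) F s = t := by
  classical
  by_contra hcon
  push_neg at hcon
  have hp1 : 1 < p := (Fact.out : p.Prime).one_lt
  set f : Polynomial F := Polynomial.X ^ p - Polynomial.X with hfdef
  have hf0 : f ≠ 0 := FiniteField.X_pow_card_sub_X_ne_zero F hp1
  have hdeg : f.natDegree = p := FiniteField.X_pow_card_sub_X_natDegree_eq F hp1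
  have hroot : ∀ x : F, x ^ p = x → x ∈ f.roots := by
    intro x hx
    rw [Polynomial.mem_roots hf0]
    simp [Polynomial.IsRoot, hfdef, hx, sub_eq_zero]
  set I : Finset F := Finset.image (algebraMap (ZMod p) F) Finset.univ with hI
  have hIcard : I.card = p := by
    rw [hI, Finset.card_image_of_injective _ (algebraMap (ZMod p) F).injective,
      Finset.card_univ, ZMod.card]
  have htI : t ∉ I := by
    intro htmem
    obtain ⟨s, _, hs⟩ := Finset.mem_image.mp htmem
    exact hcon s hs
  have hsub : insert t I ⊆ f.roots.toFinset := by
    intro x hx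
    rw [Multiset.mem_toFinset]
    rcases Finset.mem_insert.mp hx with h | h
    · exact h ▸ hroot t ht
    · obtain ⟨s, _, hs⟩ := Finset.mem_image.mp h
      apply hroot
      rw [← hs, ← map_pow, ZMod.pow_card]
  have h1 : p + 1 ≤ f.roots.toFinset.card := by
    have := Finset.card_le_card hsub
    rwa [Finset.card_insert_of_notMem htI, hIcard] at this
  have h2 : f.roots.toFinset.card ≤ p := by
    calc f.roots.toFinset.card ≤ Multiset.card f.roots := f.roots.toFinset_card_le
      _ ≤ f.natDegree := f.card_roots'
      _ = p := hdeg
  omega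

lemma sum_char {p : ℕ} [Fact p.Prime] {F : Type} [Field F] [Fintype F]
    [Algebra (ZMod p) F] (t : F) [Decidable (t = 0)] :
    ∑ u : F, ZMod.stdAddChar (Algebra.trace (ZMod p) F (u * t)) =
      if t = 0 then (Fintype.card F : ℂ) else 0 := by
  split_ifs with h
  · subst h
    simp [Finset.card_univ]
  · have hsep : Algebra.IsSeparable (ZMod p) F := inferInstance
    obtain ⟨b, hb⟩ : ∃ b : F, Algebra.trace (ZMod p) F (t * b) ≠ 0 := by
      by_contra hc
      push_neg at hc
      apply h
      apply (traceForm_nondegenerate (ZMod p) F).1 t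
      intro n
      simpa [Algebra.traceForm_apply] using hc n
    let χ : AddChar F ℂ := ZMod.stdAddChar.compAddMonoidHom
      ((Algebra.trace (ZMod p) F).toAddMonoidHom.comp (AddMonoidHom.mulRight t))
    have hform : ∀ u : F, ZMod.stdAddChar (Algebra.trace (ZMod p) F (u * t)) = χ u := by
      intro u; rfl
    simp_rw [hform]
    apply AddChar.sum_eq_zero_of_ne_one
    intro hχ
    apply hb
    have hχb : χ b = 1 := by rw [hχ]; rfl
    have hzb : ZMod.stdAddChar (Algebra.trace (ZMod p) F (b * t)) =
        ZMod.stdAddChar (0 : ZMod p) := by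
      simpa [χ] using hχb
    rw [mul_comm]
    exact ZMod.injective_stdAddChar hzb

/-- For fixed `w ≠ 0`, `∑_{(u,v) ∈ F²} D(u,v,w)² = (p-1)²·p^{3m}`. -/
theorem stmt_13 (p m k : ℕ) [Fact p.Prime] (hp : Odd p) (hm5 : 5 ≤ m) (hm : Odd m)
    (hk : 0 < k) (hgcd : Nat.gcd m k = 1)
    (F : Type) [Field F] [Fintype F] [Algebra (ZMod p) F]
    (hF : Fintype.card F = p ^ m) (w : F) (hw : w ≠ 0) :
    ∑ u : F, ∑ v : F, (Dsum p k F u v w) ^ 2 =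
      ((p : ℂ) - 1) ^ 2 * (p : ℂ) ^ (3 * m) := by
  classical
  haveI : CharP F p := charP_of_injective_algebraMap (algebraMap (ZMod p) F).injective p
  have hp1 : 1 < p := (Fact.out : p.Prime).one_lt
  -- basic facts
  have aMne : ∀ y : ZMod p, y ≠ 0 → algebraMap (ZMod p) F y ≠ 0 := by
    intro y hy
    simpa using (algebraMap (ZMod p) F).injective.ne hy
  have hyTr : ∀ (y : ZMod p) (z : F),
      y * Algebra.trace (ZMod p) F z
        = Algebra.trace (ZMod p) F (algebraMap (ZMod p) F y * z) := by
    intro y z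
    rw [← Algebra.smul_def, map_smul, smul_eq_mul]
  have hcard : ({0}ᶜ : Finset (ZMod p)).card = p - 1 := by
    rw [Finset.card_compl, Finset.card_singleton, ZMod.card]
  have hcast : ((p - 1 : ℕ) : ℂ) = (p : ℂ) - 1 := by
    rw [Nat.cast_sub hp1.le, Nat.cast_one]
  -- the membership lemma
  have mem : ∀ t : F, t ≠ 0 → t ^ p ^ k = t →
      ∃ s : ZMod p, s ≠ 0 ∧ algebraMap (ZMod p) F s = t := by
    intro t ht0 htk
    have htm : t ^ p ^ m = t := by rw [← hF]; exact FiniteField.pow_card t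
    have h1 : t ^ p ^ Nat.gcd m k = t := frob_gcd_fixed p t m k htm htk
    rw [hgcd, pow_one] at h1
    obtain ⟨s, hs⟩ := exists_zmod_of_pow_card h1
    refine ⟨s, fun h0 => ht0 ?_, hs⟩
    rw [← hs, h0, map_zero]
  -- generic multiplication-out identity
  have eg : ∀ (y1 y2 : ZMod p) (x1 x2 : F), x1 ≠ 0 → ∀ n : ℕ,
      (algebraMap (ZMod p) F y1 + algebraMap (ZMod p) F y2 * (x2 * x1⁻¹) ^ n) * x1 ^ n
        = algebraMap (ZMod p) F y1 * x1 ^ n + algebraMap (ZMod p) F y2 * x2 ^ n := by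
    intro y1 y2 x1 x2 hx1 n
    have hxn : (x1 ^ n)⁻¹ * x1 ^ n = 1 := inv_mul_cancel₀ (pow_ne_zero _ hx1)
    calc (algebraMap (ZMod p) F y1 + algebraMap (ZMod p) F y2 * (x2 * x1⁻¹) ^ n) * x1 ^ n
        = algebraMap (ZMod p) F y1 * x1 ^ n
            + algebraMap (ZMod p) F y2 * x2 ^ n * ((x1 ^ n)⁻¹ * x1 ^ n) := by
          rw [mul_pow, inv_pow]; ring
      _ = algebraMap (ZMod p) F y1 * x1 ^ n + algebraMap (ZMod p) F y2 * x2 ^ n := by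
          rw [hxn, mul_one]
  -- the reduction lemma
  have reduce : ∀ (y1 y2 : ZMod p), y1 ≠ 0 → y2 ≠ 0 → ∀ (x1 x2 : F), x1 ≠ 0 →
      algebraMap (ZMod p) F y1 * x1 ^ 2 + algebraMap (ZMod p) F y2 * x2 ^ 2 = 0 →
      algebraMap (ZMod p) F y1 * x1 ^ (p ^ k + 1)
        + algebraMap (ZMod p) F y2 * x2 ^ (p ^ k + 1) = 0 →
      x2 ≠ 0 ∧
        algebraMap (ZMod p) F y1 + algebraMap (ZMod p) F y2 * (x2 * x1⁻¹) ^ 2 = 0 ∧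
        (x2 * x1⁻¹) ^ p ^ k = x2 * x1⁻¹ := by
    intro y1 y2 hy1 hy2 x1 x2 hx1 h1 h2
    have hx2 : x2 ≠ 0 := by
      intro h
      rw [h, zero_pow two_ne_zero, mul_zero, add_zero] at h1
      exact (mul_ne_zero (aMne y1 hy1) (pow_ne_zero 2 hx1)) h1
    have ht0 : x2 * x1⁻¹ ≠ 0 := mul_ne_zero hx2 (inv_ne_zero hx1)
    have hA' : algebraMap (ZMod p) F y1
        + algebraMap (ZMod p) F y2 * (x2 * x1⁻¹) ^ 2 = 0 := by
      have h0 : (algebraMap (ZMod p) F y1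
          + algebraMap (ZMod p) F y2 * (x2 * x1⁻¹) ^ 2) * x1 ^ 2 = 0 := by
        rw [eg y1 y2 x1 x2 hx1 2]; exact h1
      rcases mul_eq_zero.mp h0 with h | h
      · exact h
      · exact absurd (pow_eq_zero_iff two_ne_zero |>.mp h) hx1
    have hB' : algebraMap (ZMod p) F y1
        + algebraMap (ZMod p) F y2 * (x2 * x1⁻¹) ^ (p ^ k + 1) = 0 := by
      have h0 : (algebraMap (ZMod p) F y1
          + algebraMap (ZMod p) F y2 * (x2 * x1⁻¹) ^ (p ^ k + 1)) * x1 ^ (p ^ k + 1) = 0 := by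
        rw [eg y1 y2 x1 x2 hx1 (p ^ k + 1)]; exact h2
      rcases mul_eq_zero.mp h0 with h | h
      · exact h
      · exact absurd (pow_eq_zero_iff (Nat.succ_ne_zero _) |>.mp h) hx1
    have h3 : (x2 * x1⁻¹) ^ (p ^ k + 1) = (x2 * x1⁻¹) ^ 2 :=
      mul_left_cancel₀ (aMne y2 hy2) (by linear_combination hB' - hA')
    have h4 : (x2 * x1⁻¹) ^ p ^ k * (x2 * x1⁻¹) = (x2 * x1⁻¹) * (x2 * x1⁻¹) := by
      rw [← pow_succ, h3, sq]
    exact ⟨hx2, hA', mul_right_cancel₀ ht0 h4⟩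
  -- the vanishing lemma
  have vanish : ∀ (y1 y2 : ZMod p), y1 ≠ 0 → y2 ≠ 0 → ∀ (x1 x2 : F),
      algebraMap (ZMod p) F y1 * x1 ^ 2 + algebraMap (ZMod p) F y2 * x2 ^ 2 = 0 →
      algebraMap (ZMod p) F y1 * x1 ^ (p ^ k + 1)
        + algebraMap (ZMod p) F y2 * x2 ^ (p ^ k + 1) = 0 →
      algebraMap (ZMod p) F y1 * x1 ^ (p ^ (2 * k) + 1)
        + algebraMap (ZMod p) F y2 * x2 ^ (p ^ (2 * k) + 1) = 0 := by
    intro y1 y2 hy1 hy2 x1 x2 h1 h2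
    by_cases hx1 : x1 = 0
    · subst hx1
      have hx2 : x2 = 0 := by
        rw [zero_pow two_ne_zero, mul_zero, zero_add] at h1
        rcases mul_eq_zero.mp h1 with h | h
        · exact absurd h (aMne y2 hy2)
        · exact pow_eq_zero_iff two_ne_zero |>.mp h
      subst hx2
      rw [zero_pow (Nat.succ_ne_zero _), mul_zero, mul_zero, add_zero]
    · obtain ⟨hx2, hA', htk⟩ := reduce y1 y2 hy1 hy2 x1 x2 hx1 h1 h2
      have ht2k : (x2 * x1⁻¹) ^ p ^ (2 * k) = x2 * x1⁻¹ := by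
        have h2k : p ^ (2 * k) = p ^ k * p ^ k := by rw [two_mul, pow_add]
        rw [h2k, pow_mul, htk, htk]
      have htd2 : (x2 * x1⁻¹) ^ (p ^ (2 * k) + 1) = (x2 * x1⁻¹) ^ 2 := by
        rw [pow_succ, ht2k, sq]
      calc algebraMap (ZMod p) F y1 * x1 ^ (p ^ (2 * k) + 1)
            + algebraMap (ZMod p) F y2 * x2 ^ (p ^ (2 * k) + 1)
          = (algebraMap (ZMod p) F y1
              + algebraMap (ZMod p) F y2 * (x2 * x1⁻¹) ^ (p ^ (2 * k) + 1))
              * x1 ^ (p ^ (2 * k) + 1) := (eg y1 y2 x1 x2 hx1 _).symm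
        _ = (algebraMap (ZMod p) F y1
              + algebraMap (ZMod p) F y2 * (x2 * x1⁻¹) ^ 2) * x1 ^ (p ^ (2 * k) + 1) := by
            rw [htd2]
        _ = 0 := by rw [hA', zero_mul]
  -- the splitting identity
  have split : ∀ (f g : F → ℂ) (cc : ℂ),
      ∑ u : F, ∑ v : F, f u * g v * cc = (∑ u : F, f u) * (∑ v : F, g v) * cc := by
    intro f g cc
    rw [Finset.sum_mul_sum, Finset.sum_mul]
    exact Finset.sum_congr rfl fun u _ => by rw [Finset.sum_mul]
  -- the key character-sum computation
  have key : ∀ y1 ∈ ({0}ᶜ : Finset (ZMod p)), ∀ y2 ∈ ({0}ᶜ : Finset (ZMod p)), ∀ x1 x2 : F,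
      (∑ u : F, ∑ v : F,
        zetaC p (y1 * Algebra.trace (ZMod p) F
          (u * x1 ^ 2 + v * x1 ^ (p ^ k + 1) + w * x1 ^ (p ^ (2 * k) + 1))) *
        zetaC p (y2 * Algebra.trace (ZMod p) F
          (u * x2 ^ 2 + v * x2 ^ (p ^ k + 1) + w * x2 ^ (p ^ (2 * k) + 1))))
      = if (algebraMap (ZMod p) F y1 * x1 ^ 2 + algebraMap (ZMod p) F y2 * x2 ^ 2 = 0 ∧
            algebraMap (ZMod p) F y1 * x1 ^ (p ^ k + 1)
              + algebraMap (ZMod p) F y2 * x2 ^ (p ^ k + 1) = 0)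
        then ((Fintype.card F : ℂ)) ^ 2 else 0 := by
    intro y1 hy1 y2 hy2 x1 x2
    have hy1' : y1 ≠ 0 := by simpa using hy1
    have hy2' : y2 ≠ 0 := by simpa using hy2
    have point : ∀ u v : F,
        zetaC p (y1 * Algebra.trace (ZMod p) F
          (u * x1 ^ 2 + v * x1 ^ (p ^ k + 1) + w * x1 ^ (p ^ (2 * k) + 1))) *
        zetaC p (y2 * Algebra.trace (ZMod p) F
          (u * x2 ^ 2 + v * x2 ^ (p ^ k + 1) + w * x2 ^ (p ^ (2 * k) + 1)))
        = ZMod.stdAddChar (Algebra.trace (ZMod p) F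
            (u * (algebraMap (ZMod p) F y1 * x1 ^ 2 + algebraMap (ZMod p) F y2 * x2 ^ 2)))
          * ZMod.stdAddChar (Algebra.trace (ZMod p) F
            (v * (algebraMap (ZMod p) F y1 * x1 ^ (p ^ k + 1)
              + algebraMap (ZMod p) F y2 * x2 ^ (p ^ k + 1))))
          * ZMod.stdAddChar (Algebra.trace (ZMod p) F
            (w * (algebraMap (ZMod p) F y1 * x1 ^ (p ^ (2 * k) + 1)
              + algebraMap (ZMod p) F y2 * x2 ^ (p ^ (2 * k) + 1)))) := by
      intro u v
      rw [zetaC_eq, zetaC_eq, ← AddChar.map_add_eq_mul, ← AddChar.map_add_eq_mul,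
        ← AddChar.map_add_eq_mul]
      congr 1
      rw [hyTr, hyTr, ← map_add, ← map_add, ← map_add]
      congr 1
      ring
    calc (∑ u : F, ∑ v : F,
        zetaC p (y1 * Algebra.trace (ZMod p) F
          (u * x1 ^ 2 + v * x1 ^ (p ^ k + 1) + w * x1 ^ (p ^ (2 * k) + 1))) *
        zetaC p (y2 * Algebra.trace (ZMod p) F
          (u * x2 ^ 2 + v * x2 ^ (p ^ k + 1) + w * x2 ^ (p ^ (2 * k) + 1))))
        = ∑ u : F, ∑ v : F,
          ZMod.stdAddChar (Algebra.trace (ZMod p) F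
            (u * (algebraMap (ZMod p) F y1 * x1 ^ 2 + algebraMap (ZMod p) F y2 * x2 ^ 2)))
          * ZMod.stdAddChar (Algebra.trace (ZMod p) F
            (v * (algebraMap (ZMod p) F y1 * x1 ^ (p ^ k + 1)
              + algebraMap (ZMod p) F y2 * x2 ^ (p ^ k + 1))))
          * ZMod.stdAddChar (Algebra.trace (ZMod p) F
            (w * (algebraMap (ZMod p) F y1 * x1 ^ (p ^ (2 * k) + 1)
              + algebraMap (ZMod p) F y2 * x2 ^ (p ^ (2 * k) + 1)))) :=
          Finset.sum_congr rfl fun u _ => Finset.sum_congr rfl fun v _ => point u v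
      _ = (∑ u : F, ZMod.stdAddChar (Algebra.trace (ZMod p) F
            (u * (algebraMap (ZMod p) F y1 * x1 ^ 2 + algebraMap (ZMod p) F y2 * x2 ^ 2))))
          * (∑ v : F, ZMod.stdAddChar (Algebra.trace (ZMod p) F
            (v * (algebraMap (ZMod p) F y1 * x1 ^ (p ^ k + 1)
              + algebraMap (ZMod p) F y2 * x2 ^ (p ^ k + 1)))))
          * ZMod.stdAddChar (Algebra.trace (ZMod p) F
            (w * (algebraMap (ZMod p) F y1 * x1 ^ (p ^ (2 * k) + 1)
              + algebraMap (ZMod p) F y2 * x2 ^ (p ^ (2 * k) + 1)))) := split _ _ _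
      _ = (if (algebraMap (ZMod p) F y1 * x1 ^ 2 + algebraMap (ZMod p) F y2 * x2 ^ 2 = 0 ∧
            algebraMap (ZMod p) F y1 * x1 ^ (p ^ k + 1)
              + algebraMap (ZMod p) F y2 * x2 ^ (p ^ k + 1) = 0)
          then ((Fintype.card F : ℂ)) ^ 2 else 0) := by
        rw [sum_char, sum_char]
        by_cases hA : algebraMap (ZMod p) F y1 * x1 ^ 2
            + algebraMap (ZMod p) F y2 * x2 ^ 2 = 0
        · by_cases hB : algebraMap (ZMod p) F y1 * x1 ^ (p ^ k + 1)
              + algebraMap (ZMod p) F y2 * x2 ^ (p ^ k + 1) = 0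
          · rw [if_pos hA, if_pos hB, if_pos ⟨hA, hB⟩,
              vanish y1 y2 hy1' hy2' x1 x2 hA hB, mul_zero, map_zero,
              AddChar.map_zero_eq_one, mul_one, sq]
          · simp [hA, hB]
        · simp [hA]
  -- the counting lemma
  have count : ∀ x1 : F,
      (∑ y1 ∈ ({0}ᶜ : Finset (ZMod p)), ∑ y2 ∈ ({0}ᶜ : Finset (ZMod p)), ∑ x2 : F,
        (if (algebraMap (ZMod p) F y1 * x1 ^ 2 + algebraMap (ZMod p) F y2 * x2 ^ 2 = 0 ∧
            algebraMap (ZMod p) F y1 * x1 ^ (p ^ k + 1)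
              + algebraMap (ZMod p) F y2 * x2 ^ (p ^ k + 1) = 0)
          then (1 : ℂ) else 0)) = ((p : ℂ) - 1) ^ 2 := by
    intro x1
    by_cases hx1 : x1 = 0
    · subst hx1
      have hone : ∀ y1 ∈ ({0}ᶜ : Finset (ZMod p)), ∀ y2 ∈ ({0}ᶜ : Finset (ZMod p)),
          (∑ x2 : F,
            (if (algebraMap (ZMod p) F y1 * (0:F) ^ 2
                  + algebraMap (ZMod p) F y2 * x2 ^ 2 = 0 ∧
                algebraMap (ZMod p) F y1 * (0:F) ^ (p ^ k + 1)
                  + algebraMap (ZMod p) F y2 * x2 ^ (p ^ k + 1) = 0)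
              then (1 : ℂ) else 0)) = 1 := by
        intro y1 hy1 y2 hy2
        have hy2' : y2 ≠ 0 := by simpa using hy2
        have hiff : ∀ x2 : F,
            (algebraMap (ZMod p) F y1 * (0:F) ^ 2
                + algebraMap (ZMod p) F y2 * x2 ^ 2 = 0 ∧
              algebraMap (ZMod p) F y1 * (0:F) ^ (p ^ k + 1)
                + algebraMap (ZMod p) F y2 * x2 ^ (p ^ k + 1) = 0) ↔ x2 = 0 := by
          intro x2
          constructor
          · rintro ⟨h1, -⟩
            rw [zero_pow two_ne_zero, mul_zero, zero_add] at h1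
            rcases mul_eq_zero.mp h1 with h | h
            · exact absurd h (aMne y2 hy2')
            · exact pow_eq_zero_iff two_ne_zero |>.mp h
          · rintro rfl
            constructor
            · rw [zero_pow two_ne_zero, mul_zero, mul_zero, add_zero]
            · rw [zero_pow (Nat.succ_ne_zero _), mul_zero, mul_zero, add_zero]
        calc (∑ x2 : F,
            (if (algebraMap (ZMod p) F y1 * (0:F) ^ 2
                  + algebraMap (ZMod p) F y2 * x2 ^ 2 = 0 ∧
                algebraMap (ZMod p) F y1 * (0:F) ^ (p ^ k + 1)
                  + algebraMap (ZMod p) F y2 * x2 ^ (p ^ k + 1) = 0)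
              then (1 : ℂ) else 0))
            = ∑ x2 : F, (if x2 = 0 then (1 : ℂ) else 0) :=
              Finset.sum_congr rfl fun x2 _ => by rw [if_congr (hiff x2) rfl rfl]
          _ = 1 := by rw [Finset.sum_ite_eq' Finset.univ (0:F) fun _ => (1:ℂ)]; simp
      calc (∑ y1 ∈ ({0}ᶜ : Finset (ZMod p)), ∑ y2 ∈ ({0}ᶜ : Finset (ZMod p)), ∑ x2 : F,
          (if (algebraMap (ZMod p) F y1 * (0:F) ^ 2
                + algebraMap (ZMod p) F y2 * x2 ^ 2 = 0 ∧
              algebraMap (ZMod p) F y1 * (0:F) ^ (p ^ k + 1)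
                + algebraMap (ZMod p) F y2 * x2 ^ (p ^ k + 1) = 0)
            then (1 : ℂ) else 0))
          = ∑ y1 ∈ ({0}ᶜ : Finset (ZMod p)), ∑ y2 ∈ ({0}ᶜ : Finset (ZMod p)), (1:ℂ) :=
            Finset.sum_congr rfl fun y1 hy1 => Finset.sum_congr rfl fun y2 hy2 =>
              hone y1 hy1 y2 hy2
        _ = ((p : ℂ) - 1) ^ 2 := by
            rw [Finset.sum_const, Finset.sum_const, hcard, nsmul_eq_mul, nsmul_eq_mul,
              mul_one, hcast, sq]
    · -- x1 ≠ 0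
      have hy2sum : ∀ y2 : ZMod p, y2 ≠ 0 →
          (∑ y1 ∈ ({0}ᶜ : Finset (ZMod p)), ∑ x2 : F,
            (if (algebraMap (ZMod p) F y1 * x1 ^ 2 + algebraMap (ZMod p) F y2 * x2 ^ 2 = 0 ∧
                algebraMap (ZMod p) F y1 * x1 ^ (p ^ k + 1)
                  + algebraMap (ZMod p) F y2 * x2 ^ (p ^ k + 1) = 0)
              then (1 : ℂ) else 0)) = (p : ℂ) - 1 := by
        intro y2 hy2
        have hsp : (∑ y1 ∈ ({0}ᶜ : Finset (ZMod p)), ∑ x2 : F,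
            (if (algebraMap (ZMod p) F y1 * x1 ^ 2 + algebraMap (ZMod p) F y2 * x2 ^ 2 = 0 ∧
                algebraMap (ZMod p) F y1 * x1 ^ (p ^ k + 1)
                  + algebraMap (ZMod p) F y2 * x2 ^ (p ^ k + 1) = 0)
              then (1 : ℂ) else 0))
            = ∑ z ∈ (({0}ᶜ : Finset (ZMod p)) ×ˢ (Finset.univ : Finset F)),
              (if (algebraMap (ZMod p) F z.1 * x1 ^ 2
                    + algebraMap (ZMod p) F y2 * z.2 ^ 2 = 0 ∧
                  algebraMap (ZMod p) F z.1 * x1 ^ (p ^ k + 1)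
                    + algebraMap (ZMod p) F y2 * z.2 ^ (p ^ k + 1) = 0)
                then (1 : ℂ) else 0) := (Finset.sum_product' _ _ _).symm
        rw [hsp, Finset.sum_boole]
        have hcardeq : (Finset.filter (fun z : ZMod p × F =>
            (algebraMap (ZMod p) F z.1 * x1 ^ 2
              + algebraMap (ZMod p) F y2 * z.2 ^ 2 = 0 ∧
            algebraMap (ZMod p) F z.1 * x1 ^ (p ^ k + 1)
              + algebraMap (ZMod p) F y2 * z.2 ^ (p ^ k + 1) = 0))
            (({0}ᶜ : Finset (ZMod p)) ×ˢ (Finset.univ : Finset F))).card = p - 1 := by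
          rw [← hcard]
          refine (Finset.card_nbij
            (fun s : ZMod p => ((-y2 * s ^ 2 : ZMod p), algebraMap (ZMod p) F s * x1))
            ?_ ?_ ?_).symm
          · -- maps into the filter
            intro s hs
            have hs0 : s ≠ 0 := by simpa using hs
            have hfrob : (algebraMap (ZMod p) F s) ^ p ^ k = algebraMap (ZMod p) F s := by
              rw [← map_pow, ZMod.pow_card_pow]
            have hpows : (algebraMap (ZMod p) F s) ^ (p ^ k + 1)
                = (algebraMap (ZMod p) F s) ^ 2 := by
              rw [pow_succ, hfrob, sq]
            refine Finset.mem_filter.mpr ⟨Finset.mem_product.mpr ⟨?_, Finset.mem_univ _⟩, ?_, ?_⟩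
            · simpa using neg_ne_zero.mpr (mul_ne_zero hy2 (pow_ne_zero 2 hs0))
            · dsimp only
              rw [map_mul, map_neg, map_pow]
              ring
            · dsimp only
              rw [map_mul, map_neg, map_pow, mul_pow, hpows]
              ring
          · -- injective
            intro s1 h1 s2 h2 heq
            have h2nd : algebraMap (ZMod p) F s1 * x1 = algebraMap (ZMod p) F s2 * x1 :=
              congrArg Prod.snd heq
            exact (algebraMap (ZMod p) F).injective (mul_right_cancel₀ hx1 h2nd)
          · -- surjective
            intro z hz
            simp only [Finset.coe_filter, Set.mem_setOf_eq] at hz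
            obtain ⟨hzP, hz1, hz2⟩ := hz
            rcases Finset.mem_product.mp hzP with ⟨hz1mem, -⟩
            have hy1 : z.1 ≠ 0 := by simpa using hz1mem
            obtain ⟨hx2, hA', htk⟩ := reduce z.1 y2 hy1 hy2 x1 z.2 hx1 hz1 hz2
            have ht0 : z.2 * x1⁻¹ ≠ 0 := mul_ne_zero hx2 (inv_ne_zero hx1)
            obtain ⟨s, hs0, hs⟩ := mem (z.2 * x1⁻¹) ht0 htk
            refine ⟨s, by simpa using hs0, ?_⟩
            have hx2eq : algebraMap (ZMod p) F s * x1 = z.2 := by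
              rw [hs]
              field_simp
            have hy1eq : -y2 * s ^ 2 = z.1 := by
              apply (algebraMap (ZMod p) F).injective
              rw [map_mul, map_neg, map_pow, hs]
              linear_combination -hA'
            exact Prod.ext hy1eq hx2eq
        rw [hcardeq, hcast]
      calc (∑ y1 ∈ ({0}ᶜ : Finset (ZMod p)), ∑ y2 ∈ ({0}ᶜ : Finset (ZMod p)), ∑ x2 : F,
          (if (algebraMap (ZMod p) F y1 * x1 ^ 2 + algebraMap (ZMod p) F y2 * x2 ^ 2 = 0 ∧
              algebraMap (ZMod p) F y1 * x1 ^ (p ^ k + 1)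
                + algebraMap (ZMod p) F y2 * x2 ^ (p ^ k + 1) = 0)
            then (1 : ℂ) else 0))
          = ∑ y2 ∈ ({0}ᶜ : Finset (ZMod p)), ∑ y1 ∈ ({0}ᶜ : Finset (ZMod p)), ∑ x2 : F,
          (if (algebraMap (ZMod p) F y1 * x1 ^ 2 + algebraMap (ZMod p) F y2 * x2 ^ 2 = 0 ∧
              algebraMap (ZMod p) F y1 * x1 ^ (p ^ k + 1)
                + algebraMap (ZMod p) F y2 * x2 ^ (p ^ k + 1) = 0)
            then (1 : ℂ) else 0) := Finset.sum_comm
        _ = ∑ y2 ∈ ({0}ᶜ : Finset (ZMod p)), ((p : ℂ) - 1) :=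
            Finset.sum_congr rfl fun y2 hy2 => hy2sum y2 (by simpa using hy2)
        _ = ((p : ℂ) - 1) ^ 2 := by rw [Finset.sum_const, hcard, nsmul_eq_mul, hcast, sq]
  -- expansion of the square
  have expand : ∀ u v : F, (Dsum p k F u v w) ^ 2
      = ∑ y1 ∈ ({0}ᶜ : Finset (ZMod p)), ∑ y2 ∈ ({0}ᶜ : Finset (ZMod p)),
        ∑ x1 : F, ∑ x2 : F,
        zetaC p (y1 * Algebra.trace (ZMod p) F
          (u * x1 ^ 2 + v * x1 ^ (p ^ k + 1) + w * x1 ^ (p ^ (2 * k) + 1))) *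
        zetaC p (y2 * Algebra.trace (ZMod p) F
          (u * x2 ^ 2 + v * x2 ^ (p ^ k + 1) + w * x2 ^ (p ^ (2 * k) + 1))) := by
    intro u v
    rw [sq]
    unfold Dsum
    rw [Finset.sum_mul_sum]
    exact Finset.sum_congr rfl fun y1 _ => Finset.sum_congr rfl fun y2 _ => by
      rw [Finset.sum_mul_sum]
  -- main computation
  calc ∑ u : F, ∑ v : F, (Dsum p k F u v w) ^ 2
      = ∑ u : F, ∑ v : F, ∑ y1 ∈ ({0}ᶜ : Finset (ZMod p)), ∑ y2 ∈ ({0}ᶜ : Finset (ZMod p)),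
        ∑ x1 : F, ∑ x2 : F,
        zetaC p (y1 * Algebra.trace (ZMod p) F
          (u * x1 ^ 2 + v * x1 ^ (p ^ k + 1) + w * x1 ^ (p ^ (2 * k) + 1))) *
        zetaC p (y2 * Algebra.trace (ZMod p) F
          (u * x2 ^ 2 + v * x2 ^ (p ^ k + 1) + w * x2 ^ (p ^ (2 * k) + 1))) :=
        Finset.sum_congr rfl fun u _ => Finset.sum_congr rfl fun v _ => expand u v
    _ = ∑ y1 ∈ ({0}ᶜ : Finset (ZMod p)), ∑ y2 ∈ ({0}ᶜ : Finset (ZMod p)),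
        ∑ x1 : F, ∑ x2 : F, ∑ u : F, ∑ v : F,
        zetaC p (y1 * Algebra.trace (ZMod p) F
          (u * x1 ^ 2 + v * x1 ^ (p ^ k + 1) + w * x1 ^ (p ^ (2 * k) + 1))) *
        zetaC p (y2 * Algebra.trace (ZMod p) F
          (u * x2 ^ 2 + v * x2 ^ (p ^ k + 1) + w * x2 ^ (p ^ (2 * k) + 1))) :=
        sum_swap_uv6 _ _ _ _ _ _ _
    _ = ∑ y1 ∈ ({0}ᶜ : Finset (ZMod p)), ∑ y2 ∈ ({0}ᶜ : Finset (ZMod p)),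
        ∑ x1 : F, ∑ x2 : F,
        (if (algebraMap (ZMod p) F y1 * x1 ^ 2 + algebraMap (ZMod p) F y2 * x2 ^ 2 = 0 ∧
            algebraMap (ZMod p) F y1 * x1 ^ (p ^ k + 1)
              + algebraMap (ZMod p) F y2 * x2 ^ (p ^ k + 1) = 0)
          then ((Fintype.card F : ℂ)) ^ 2 else 0) :=
        Finset.sum_congr rfl fun y1 hy1 => Finset.sum_congr rfl fun y2 hy2 =>
          Finset.sum_congr rfl fun x1 _ => Finset.sum_congr rfl fun x2 _ =>
            key y1 hy1 y2 hy2 x1 x2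
    _ = ((Fintype.card F : ℂ)) ^ 2 *
        ∑ y1 ∈ ({0}ᶜ : Finset (ZMod p)), ∑ y2 ∈ ({0}ᶜ : Finset (ZMod p)),
        ∑ x1 : F, ∑ x2 : F,
        (if (algebraMap (ZMod p) F y1 * x1 ^ 2 + algebraMap (ZMod p) F y2 * x2 ^ 2 = 0 ∧
            algebraMap (ZMod p) F y1 * x1 ^ (p ^ k + 1)
              + algebraMap (ZMod p) F y2 * x2 ^ (p ^ k + 1) = 0)
          then (1 : ℂ) else 0) := by
        simp_rw [Finset.mul_sum, mul_ite, mul_one, mul_zero]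
    _ = ((Fintype.card F : ℂ)) ^ 2 *
        ∑ x1 : F, ∑ y1 ∈ ({0}ᶜ : Finset (ZMod p)), ∑ y2 ∈ ({0}ᶜ : Finset (ZMod p)),
        ∑ x2 : F,
        (if (algebraMap (ZMod p) F y1 * x1 ^ 2 + algebraMap (ZMod p) F y2 * x2 ^ 2 = 0 ∧
            algebraMap (ZMod p) F y1 * x1 ^ (p ^ k + 1)
              + algebraMap (ZMod p) F y2 * x2 ^ (p ^ k + 1) = 0)
          then (1 : ℂ) else 0) := by
        congr 1
        exact sum_swap_uv _ _ _ _
    _ = ((Fintype.card F : ℂ)) ^ 2 * ∑ x1 : F, ((p : ℂ) - 1) ^ 2 := by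
        congr 1
        exact Finset.sum_congr rfl fun x1 _ => count x1
    _ = ((Fintype.card F : ℂ)) ^ 2 * ((Fintype.card F : ℂ) * ((p : ℂ) - 1) ^ 2) := by
        rw [Finset.sum_const, Finset.card_univ, nsmul_eq_mul]
    _ = ((p : ℂ) - 1) ^ 2 * (p : ℂ) ^ (3 * m) := by
        rw [hF]
        push_cast
        ring
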